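/- Fix a natural number k ≥ 1, set N = 3k(k+1)+1 and S = Σ_{j=1}^k cos((2j−1)π/(6k)). Then the limit as the real number s tends to +∞ of 8π N · csc(2π/s) · (sin(π/s) + cos(π/s + π/6))² / (s (4S + tan(π/s) + √3)²) equals N sin²(π/(6k)) / (1 + sin(π/(6k)))². -/

import Mathlib

open Real Finset Filter

private lemma aux_div_eq (a n x s d : ℝ) :
    a * n ^ 2 / (x * s * d ^ 2) = a * (1/x) * n ^ 2 / (s * d ^ 2) := by ring

private lemma sum_cos_odd (θ : ℝ) (n : ℕ) :
    2 * Real.sin θ * ∑ j ∈ Finset.range n, Real.cos ((2 * (j:ℝ) + 1) * θ)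
      = Real.sin (2 * n * θ) := by
  induction n with
  | zero => simp
  | succ n ih =>
    rw [Finset.sum_range_succ, mul_add, ih]
    have key : Real.sin (2*((n:ℝ)+1)*θ) - Real.sin (2*(n:ℝ)*θ)
        = 2 * Real.sin θ * Real.cos ((2*(n:ℝ)+1)*θ) := by
      have e1 : 2*((n:ℝ)+1)*θ = (2*(n:ℝ)+1)*θ + θ := by ring
      have e2 : 2*(n:ℝ)*θ = (2*(n:ℝ)+1)*θ - θ := by ring
      rw [e1, e2, Real.sin_add, Real.sin_sub]; ring
    push_cast
    linarith

theorem chp_density_circle_limit (k : ℕ) (hk : 1 ≤ k) (N : ℕ)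
    (hN : N = 3 * k * (k + 1) + 1) (S : ℝ)
    (hS : S = ∑ j ∈ Finset.range k, Real.cos ((2 * (j : ℝ) + 1) * π / (6 * k))) :
    Filter.Tendsto
      (fun s : ℝ =>
        8 * π * (N : ℝ) * (1 / Real.sin (2 * π / s))
          * (Real.sin (π / s) + Real.cos (π / s + π / 6)) ^ 2
          / (s * (4 * S + Real.tan (π / s) + Real.sqrt 3) ^ 2))
      Filter.atTop
      (nhds ((N : ℝ) * Real.sin (π / (6 * k)) ^ 2
        / (1 + Real.sin (π / (6 * k))) ^ 2)) := by
  set θ : ℝ := π / (6 * k) with hθ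
  have hk0 : (k : ℝ) ≠ 0 := Nat.cast_ne_zero.2 (by omega)
  have hk1 : (1:ℝ) ≤ (k:ℝ) := by exact_mod_cast hk
  have hkpos : (0:ℝ) < k := by positivity
  have hθpos : 0 < θ := by rw [hθ]; positivity
  have hθlt : θ < π := by
    rw [hθ, div_lt_iff₀ (by positivity)]
    nlinarith [Real.pi_pos]
  have hsinθ : 0 < Real.sin θ := Real.sin_pos_of_pos_of_lt_pi hθpos hθlt
  -- the sum identity : 4 * S * sin θ = √3
  have hSid : 4 * S * Real.sin θ = Real.sqrt 3 := by
    have h1 : 2 * Real.sin θ * S = Real.sin (2 * k * θ) := by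
      rw [hS, ← sum_cos_odd θ k]
      congr 1
      refine Finset.sum_congr rfl fun j _ => ?_
      rw [hθ, mul_div_assoc]
    have h2 : 2 * (k:ℝ) * θ = π / 3 := by rw [hθ]; field_simp; ring
    rw [h2, Real.sin_pi_div_three] at h1
    linarith
  have hsqrt3 : (0:ℝ) < Real.sqrt 3 := Real.sqrt_pos.2 (by norm_num)
  have hSpos : 0 < S := by nlinarith
  have hden : 0 < 4 * S + Real.sqrt 3 := by linarith
  -- tendsto facts
  have hπ0 : Tendsto (fun s : ℝ => π / s) atTop (nhds 0) :=
    tendsto_const_nhds.div_atTop tendsto_id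
  have h2π0 : Tendsto (fun s : ℝ => 2 * π / s) atTop (nhds 0) :=
    tendsto_const_nhds.div_atTop tendsto_id
  have h2π0' : Tendsto (fun s : ℝ => 2 * π / s) atTop (nhdsWithin 0 {x | x ≠ 0}) := by
    apply tendsto_nhdsWithin_of_tendsto_nhds_of_eventually_within _ h2π0
    filter_upwards [eventually_gt_atTop 0] with s hs
    have : 0 < 2 * π / s := by positivity
    exact ne_of_gt this
  have hsinc : Tendsto (fun x : ℝ => Real.sin x / x) (nhdsWithin 0 {x | x ≠ 0}) (nhds 1) := by
    have h := Real.hasDerivAt_sin 0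
    rw [hasDerivAt_iff_tendsto_slope] at h
    change Tendsto _ (nhdsWithin 0 ({0}ᶜ : Set ℝ)) _
    simpa [slope_fun_def, div_eq_inv_mul] using h
  have hq : Tendsto (fun s : ℝ => Real.sin (2 * π / s) / (2 * π / s)) atTop (nhds 1) :=
    hsinc.comp h2π0'
  have hsinπ : Tendsto (fun s : ℝ => Real.sin (π / s)) atTop (nhds 0) := by
    have := (Real.continuous_sin.tendsto 0).comp hπ0
    simpa [Function.comp_def] using this
  have hcosπ : Tendsto (fun s : ℝ => Real.cos (π / s + π / 6)) atTop (nhds (Real.sqrt 3 / 2)) := by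
    have := ((Real.continuous_cos.tendsto (0 + π/6)).comp (hπ0.add tendsto_const_nhds))
    simpa [Real.cos_pi_div_six, Function.comp_def] using this
  have htan : Tendsto (fun s : ℝ => Real.tan (π / s)) atTop (nhds 0) := by
    have hc : ContinuousAt Real.tan 0 := Real.continuousAt_tan.2 (by simp)
    have := hc.tendsto.comp hπ0
    simpa [Function.comp_def] using this
  -- the auxiliary function g with its limit
  have hlim : Tendsto
      (fun s : ℝ => 8 * π * (N:ℝ) * (Real.sin (π / s) + Real.cos (π / s + π / 6)) ^ 2
        / (Real.sin (2 * π / s) / (2 * π / s) * (2 * π)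
            * (4 * S + Real.tan (π / s) + Real.sqrt 3) ^ 2))
      atTop
      (nhds (8 * π * (N:ℝ) * (0 + Real.sqrt 3 / 2) ^ 2
        / (1 * (2 * π) * (4 * S + 0 + Real.sqrt 3) ^ 2))) := by
    apply Tendsto.div
    · exact tendsto_const_nhds.mul ((hsinπ.add hcosπ).pow 2)
    · exact (hq.mul_const (2 * π)).mul
        (((tendsto_const_nhds.add htan).add tendsto_const_nhds).pow 2)
    · have : (0:ℝ) < 1 * (2 * π) * (4 * S + 0 + Real.sqrt 3) ^ 2 := by
        have := Real.pi_pos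
        positivity
      exact ne_of_gt this
  -- value equality
  have hval : (N : ℝ) * Real.sin θ ^ 2 / (1 + Real.sin θ) ^ 2
      = 8 * π * (N:ℝ) * (0 + Real.sqrt 3 / 2) ^ 2
        / (1 * (2 * π) * (4 * S + 0 + Real.sqrt 3) ^ 2) := by
    have h3 : Real.sqrt 3 ^ 2 = 3 := Real.sq_sqrt (by norm_num)
    have h1s : (0:ℝ) < 1 + Real.sin θ := by linarith
    have e2 : 4 * S + 0 + Real.sqrt 3 = Real.sqrt 3 * (1 + Real.sin θ) / Real.sin θ := by
      rw [eq_div_iff hsinθ.ne']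
      nlinarith [hSid]
    rw [e2, div_pow, mul_pow, h3]
    have hπ := Real.pi_pos
    field_simp
    linear_combination (-8 * (N:ℝ)) * h3
  rw [hval]
  apply Tendsto.congr' _ hlim
  filter_upwards [eventually_ge_atTop 1] with s hs
  have hs' : (0:ℝ) < s := by linarith
  have hqe : Real.sin (2 * π / s) / (2 * π / s) * (2 * π) = Real.sin (2 * π / s) * s := by
    rw [div_mul_eq_mul_div, div_eq_iff (by positivity : (2:ℝ)*π/s ≠ 0)]
    field_simp
  simp only [hqe]
  exact aux_div_eq (8 * π * (N:ℝ)) _ _ s _
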